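/- Let N be a nest with an infinite-dimensional atom E = N₊ ⊖ N. Then the compression map γ : T(N) → B(E), γ(X) = P(E)X|_E, is a surjective algebra homomorphism, and consequently both the left and right topological stable ranks of T(N) are infinite. -/

import Mathlib

set_option synthInstance.maxHeartbeats 1000000
set_option maxHeartbeats 1000000

/-- `n`-tuples generating `A` as a left ideal. -/
noncomputable def Lg (A : Type*) [NormedRing A] (n : ℕ) : Set (Fin n → A) :=
  {a | ∃ b : Fin n → A, ∑ i, b i * a i = 1}

/-- `n`-tuples generating `A` as a right ideal. -/
noncomputable def Rg (A : Type*) [NormedRing A] (n : ℕ) : Set (Fin n → A) :=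
  {a | ∃ b : Fin n → A, ∑ i, a i * b i = 1}

/-- The left topological stable rank. -/
noncomputable def ltsr (A : Type*) [NormedRing A] : ℕ∞ :=
  sInf {N : ℕ∞ | ∃ n : ℕ, N = n ∧ Dense (Lg A n)}

/-- The right topological stable rank. -/
noncomputable def rtsr (A : Type*) [NormedRing A] : ℕ∞ :=
  sInf {N : ℕ∞ | ∃ n : ℕ, N = n ∧ Dense (Rg A n)}


/-- A nest: a chain of closed subspaces containing `{0}` and `H`, closed under
intersections and closed linear spans. -/
structure IsNest {H : Type*} [NormedAddCommGroup H] [InnerProductSpace ℂ H]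
    (𝒩 : Set (Submodule ℂ H)) : Prop where
  isClosed : ∀ N ∈ 𝒩, IsClosed (N : Set H)
  isChain : IsChain (· ≤ ·) 𝒩
  bot_mem : ⊥ ∈ 𝒩
  top_mem : ⊤ ∈ 𝒩
  sInf_mem : ∀ S ⊆ 𝒩, S.Nonempty → sInf S ∈ 𝒩
  span_mem : ∀ S ⊆ 𝒩, S.Nonempty → (sSup S).topologicalClosure ∈ 𝒩

/-- The nest algebra of all bounded operators leaving every subspace of `𝒩` invariant. -/
noncomputable def nestAlgebra {H : Type*} [NormedAddCommGroup H] [InnerProductSpace ℂ H]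
    (𝒩 : Set (Submodule ℂ H)) : Subalgebra ℂ (H →L[ℂ] H) where
  carrier := {T | ∀ N ∈ 𝒩, ∀ x ∈ N, T x ∈ N}
  mul_mem' := fun hT hS N hN x hx => hT N hN _ (hS N hN x hx)
  add_mem' := fun hT hS N hN x hx => N.add_mem (hT N hN x hx) (hS N hN x hx)
  algebraMap_mem' := fun c N hN x hx => by
    simpa [Algebra.algebraMap_eq_smul_one] using N.smul_mem c hx

noncomputable section AuxStmt16

open Function
open scoped ENNReal NNReal





namespace Stmt16Aux

local notation "⟪" x ", " y "⟫" => @inner ℂ _ _ x y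

lemma extend_norm_sq {α β : Type*} {j : α → β} (hj : Function.Injective j) (f : α → ℂ) :
    (fun b => ‖Function.extend j f 0 b‖ ^ (2:ℝ≥0∞).toReal)
      = Function.extend j (fun a => ‖f a‖ ^ (2:ℝ≥0∞).toReal) 0 := by
  funext b
  by_cases h : ∃ a, j a = b
  · obtain ⟨a, rfl⟩ := h
    rw [hj.extend_apply, hj.extend_apply]
  · rw [Function.extend_apply' _ _ _ h, Function.extend_apply' _ _ _ h]
    simp only [Pi.zero_apply, norm_zero]
    rw [Real.zero_rpow (by norm_num)]

lemma memℓp_extend {α β : Type*} {j : α → β} (hj : Function.Injective j)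
    (f : lp (fun _ : α => ℂ) 2) : Memℓp (Function.extend j ⇑f 0) 2 := by
  apply memℓp_gen
  rw [extend_norm_sq hj]
  rw [summable_extend_zero hj]
  exact (lp.memℓp f).summable (by norm_num)

/-- Extension by zero along an injection, as a linear isometry of `ℓ²` spaces. -/
noncomputable def lpExtend {α β : Type*} {j : α → β} (hj : Function.Injective j) :
    lp (fun _ : α => ℂ) 2 →ₗᵢ[ℂ] lp (fun _ : β => ℂ) 2 where
  toFun f := ⟨Function.extend j ⇑f 0, memℓp_extend hj f⟩
  map_add' f g := by
    apply Subtype.ext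
    funext b
    show Function.extend j ⇑(f + g) 0 b = Function.extend j ⇑f 0 b + Function.extend j ⇑g 0 b
    rw [lp.coeFn_add f g]
    by_cases h : ∃ a, j a = b
    · obtain ⟨a, rfl⟩ := h
      rw [hj.extend_apply, hj.extend_apply, hj.extend_apply, Pi.add_apply]
    · rw [extend_apply' _ _ _ h, extend_apply' _ _ _ h, extend_apply' _ _ _ h]
      simp
  map_smul' c f := by
    apply Subtype.ext
    funext b
    show Function.extend j ⇑(c • f) 0 b = c • Function.extend j ⇑f 0 b
    rw [lp.coeFn_smul c f]
    by_cases h : ∃ a, j a = b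
    · obtain ⟨a, rfl⟩ := h
      rw [hj.extend_apply, hj.extend_apply, Pi.smul_apply]
    · rw [extend_apply' _ _ _ h, extend_apply' _ _ _ h]
      simp
  norm_map' f := by
    have h2 : (0:ℝ) < (2:ℝ≥0∞).toReal := by norm_num
    rw [lp.norm_eq_tsum_rpow h2, lp.norm_eq_tsum_rpow h2]
    congr 1
    calc (∑' b : β, ‖Function.extend j ⇑f 0 b‖ ^ (2:ℝ≥0∞).toReal)
        = ∑' b : β, Function.extend j (fun a => ‖f a‖ ^ (2:ℝ≥0∞).toReal) 0 b := by
          rw [← extend_norm_sq hj ⇑f]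
      _ = ∑' a : α, ‖f a‖ ^ (2:ℝ≥0∞).toReal := tsum_extend_zero hj _

lemma lpExtend_apply {α β : Type*} {j : α → β} (hj : Function.Injective j)
    (f : lp (fun _ : α => ℂ) 2) (b : β) :
    (lpExtend hj f) b = Function.extend j ⇑f 0 b := rfl

lemma countable_of_orthonormal {X : Type*} [NormedAddCommGroup X] [InnerProductSpace ℂ X]
    [TopologicalSpace.SeparableSpace X] {ι : Type*} {v : ι → X} (hv : Orthonormal ℂ v) :
    Countable ι := by
  apply Pairwise.countable_of_isOpen_disjoint (s := fun i => Metric.ball (v i) (1/2))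
  · intro i j hij
    apply Metric.ball_disjoint_ball
    have h0 : ⟪v i, v j⟫ = 0 := hv.2 hij
    have hsq : ‖v i - v j‖ ^ 2 = 2 := by
      rw [@norm_sub_sq ℂ]
      rw [hv.1 i, hv.1 j, h0]
      norm_num
    have hd : dist (v i) (v j) = ‖v i - v j‖ := dist_eq_norm _ _
    nlinarith [norm_nonneg (v i - v j), dist_nonneg (x := v i) (y := v j)]
  · intro i; exact Metric.isOpen_ball
  · intro i; exact Metric.nonempty_ball.2 (by norm_num)

lemma infinite_of_hilbertBasis {X : Type*} [NormedAddCommGroup X] [InnerProductSpace ℂ X]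
    (hinf : ¬ FiniteDimensional ℂ X) [CompleteSpace X] {ι : Type*} (b : HilbertBasis ι ℂ X) :
    Infinite ι := by
  rw [← not_finite_iff_infinite]
  intro hfin
  apply hinf
  have hfd : FiniteDimensional ℂ (Submodule.span ℂ (Set.range ⇑b)) :=
    FiniteDimensional.span_of_finite ℂ (Set.finite_range ⇑b)
  have hclosed : IsClosed ((Submodule.span ℂ (Set.range ⇑b)) : Set X) :=
    Submodule.closed_of_finiteDimensional _
  have hdense := b.dense_span
  have htop : Submodule.span ℂ (Set.range ⇑b) = ⊤ := by
    rw [← hclosed.submodule_topologicalClosure_eq]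
    exact hdense
  rw [htop] at hfd
  exact Submodule.topEquiv.finiteDimensional

lemma exists_isometry (Y X : Type*) [NormedAddCommGroup X] [InnerProductSpace ℂ X]
    [CompleteSpace X] [TopologicalSpace.SeparableSpace X]
    [NormedAddCommGroup Y] [InnerProductSpace ℂ Y] [CompleteSpace Y]
    [TopologicalSpace.SeparableSpace Y]
    (hinf : ¬ FiniteDimensional ℂ X) :
    ∃ (V : Y →ₗᵢ[ℂ] X) (k : X), ‖k‖ = 1 ∧ ∀ y, ⟪k, V y⟫ = 0 := by
  obtain ⟨wX, bX, hbX⟩ := exists_hilbertBasis ℂ X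
  obtain ⟨wY, bY, hbY⟩ := exists_hilbertBasis ℂ Y
  haveI : Countable wX := countable_of_orthonormal bX.orthonormal
  haveI : Countable wY := countable_of_orthonormal bY.orthonormal
  haveI : Infinite wX := infinite_of_hilbertBasis hinf bX
  haveI : Denumerable wX := (nonempty_denumerable (↥wX)).some
  let eX : ↥wX ≃ ℕ := Denumerable.eqv _
  obtain ⟨fY, hfY⟩ := exists_injective_nat (↥wY)
  let j : ↥wY → ↥wX := fun a => eX.symm (fY a + 1)
  have hj : Function.Injective j := by
    intro a b h
    exact hfY (by have := eX.symm.injective h; omega)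
  let k0 : ↥wX := eX.symm 0
  have hk0 : ∀ a, j a ≠ k0 := by
    intro a h
    have := eX.symm.injective h
    omega
  let V : Y →ₗᵢ[ℂ] X :=
    (bX.repr.symm.toLinearIsometry).comp ((lpExtend hj).comp bY.repr.toLinearIsometry)
  refine ⟨V, bX k0, bX.orthonormal.1 k0, fun y => ?_⟩
  rw [← bX.repr_apply_apply (V y) k0]
  have hrepr : bX.repr (V y) = (lpExtend hj) (bY.repr y) := by
    show bX.repr (bX.repr.symm ((lpExtend hj) (bY.repr y))) = _
    rw [LinearIsometryEquiv.apply_symm_apply]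
  rw [hrepr, lpExtend_apply]
  exact Function.extend_apply' _ _ _ (by rintro ⟨a, ha⟩; exact hk0 a ha)

lemma not_dense_Lg (X : Type*) [NormedAddCommGroup X] [InnerProductSpace ℂ X] [CompleteSpace X]
    [TopologicalSpace.SeparableSpace X] (hinf : ¬ FiniteDimensional ℂ X) (n : ℕ) :
    ¬ Dense (Lg (X →L[ℂ] X) n) := by
  intro hdense
  haveI : SecondCountableTopology X := UniformSpace.secondCountable_of_separable X
  haveI hsc : SecondCountableTopology (PiLp 2 (fun _ : Fin n => X)) :=
    inferInstance
  haveI : CompleteSpace (PiLp 2 (fun _ : Fin n => X)) :=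
    inferInstance
  obtain ⟨V, k, hk1, hkV⟩ := exists_isometry (PiLp 2 (fun _ : Fin n => X)) X hinf
  set Y := PiLp 2 (fun _ : Fin n => X)
  set W : X →L[ℂ] Y := ContinuousLinearMap.adjoint V.toContinuousLinearMap with hW
  have hWV : ∀ y : Y, W (V y) = y := by
    intro y; apply ext_inner_right ℂ; intro z
    rw [hW, ContinuousLinearMap.adjoint_inner_left]
    exact V.inner_map_map y z
  have hWk : W k = 0 := by
    apply ext_inner_right ℂ; intro z
    rw [hW, ContinuousLinearMap.adjoint_inner_left, inner_zero_left]
    exact hkV z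
  let pr : Fin n → (Y →L[ℂ] X) := fun i =>
    (ContinuousLinearMap.proj i).comp
      (PiLp.continuousLinearEquiv 2 ℂ (fun _ : Fin n => X)).toContinuousLinearMap
  let w : Fin n → (X →L[ℂ] X) := fun i => (pr i).comp W
  set ε : ℝ := 1/(2*((n:ℝ)+1)) with hε
  have hεpos : 0 < ε := by positivity
  obtain ⟨d, hdmem, hdd⟩ := Metric.mem_closure_iff.1 (hdense w) ε hεpos
  obtain ⟨b, hb⟩ := hdmem
  have hdi : ∀ i, ‖w i - d i‖ < ε := by
    intro i
    calc ‖w i - d i‖ = dist (w i) (d i) := (dist_eq_norm _ _).symm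
      _ ≤ dist w d := dist_le_pi_dist w d i
      _ < ε := hdd
  let D : X →L[ℂ] Y :=
    ((PiLp.continuousLinearEquiv 2 ℂ (fun _ : Fin n => X)).symm.toContinuousLinearMap).comp
      (ContinuousLinearMap.pi d)
  have hDapp : ∀ (x : X) (i : Fin n), D x i = d i x := fun x i => rfl
  have hwapp : ∀ (z : X) (i : Fin n), w i z = W z i := fun z i => rfl
  let C : Y →L[ℂ] Y := D.comp V.toContinuousLinearMap
  have hCapp : ∀ y : Y, C y = D (V y) := fun y => rfl
  have hnε : (n : ℝ) * ε^2 ≤ 1/4 := by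
    rw [hε, div_pow, one_pow, mul_one_div, div_le_div_iff₀ (by positivity) (by norm_num)]
    nlinarith [sq_nonneg ((n:ℝ))]
  have hkey : ∀ y : Y, ‖y - C y‖ ≤ (1/2) * ‖y‖ := by
    intro y
    have h1 : ∀ i, ‖(y - C y) i‖ ≤ ε * ‖y‖ := by
      intro i
      have e1 : (y - C y) i = (w i - d i) (V y) := by
        show y i - (C y) i = (w i) (V y) - (d i) (V y)
        rw [hCapp, hDapp, hwapp, hWV]
      rw [e1]
      calc ‖(w i - d i) (V y)‖ ≤ ‖w i - d i‖ * ‖V y‖ := (w i - d i).le_opNorm (V y)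
        _ ≤ ε * ‖y‖ := by
            rw [V.norm_map]
            exact mul_le_mul_of_nonneg_right (hdi i).le (norm_nonneg _)
    have hsum : ‖y - C y‖ ^ 2 ≤ (n : ℝ) * (ε * ‖y‖)^2 := by
      rw [PiLp.norm_sq_eq_of_L2]
      calc (∑ i, ‖(y - C y) i‖^2) ≤ ∑ _i : Fin n, (ε*‖y‖)^2 :=
            Finset.sum_le_sum (fun i _ => pow_le_pow_left₀ (norm_nonneg _) (h1 i) 2)
        _ = (n:ℝ) * (ε*‖y‖)^2 := by
            rw [Finset.sum_const, Finset.card_univ, Fintype.card_fin, nsmul_eq_mul]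
    nlinarith [norm_nonneg (y - C y), norm_nonneg y, sq_nonneg (‖y‖), hεpos,
      mul_le_mul_of_nonneg_right hnε (sq_nonneg ‖y‖)]
  have hC : ‖(1 : Y →L[ℂ] Y) - C‖ ≤ 1/2 := by
    apply ContinuousLinearMap.opNorm_le_bound _ (by norm_num)
    intro y
    calc ‖((1 : Y →L[ℂ] Y) - C) y‖ = ‖y - C y‖ := by
          rw [ContinuousLinearMap.sub_apply, ContinuousLinearMap.one_apply]
      _ ≤ 1/2 * ‖y‖ := hkey y
  have hCu : ‖(1 : Y →L[ℂ] Y) - C‖ < 1 := lt_of_le_of_lt hC (by norm_num)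
  let u : (Y →L[ℂ] Y)ˣ := Units.oneSub ((1 : Y →L[ℂ] Y) - C) hCu
  have hu : (u : Y →L[ℂ] Y) = C := sub_sub_cancel 1 C
  let y0 : Y := (↑u⁻¹ : Y →L[ℂ] Y) (D k)
  have hCy0 : C y0 = D k := by
    have h := u.mul_inv
    have := congrArg (fun (T : Y →L[ℂ] Y) => T (D k)) h
    simpa [ContinuousLinearMap.mul_apply, hu] using this
  set x : X := k - V y0 with hx
  have hdx : ∀ i, d i x = 0 := by
    intro i
    have hD0 : D x = 0 := by
      rw [hx, map_sub]
      rw [show D (V y0) = C y0 from rfl, hCy0, sub_self]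
    calc d i x = D x i := (hDapp x i).symm
      _ = 0 := by rw [hD0]; rfl
  have hxne : x ≠ 0 := by
    intro h0
    have h1 : ⟪k, x⟫ = 0 := by rw [h0, inner_zero_right]
    have h2 : ⟪k, x⟫ = 1 := by
      rw [hx, inner_sub_right, hkV y0, sub_zero, inner_self_eq_norm_sq_to_K, hk1]
      norm_num
    rw [h1] at h2
    exact one_ne_zero h2.symm
  apply hxne
  have h1 : (∑ i, b i * d i) x = x := by rw [hb, ContinuousLinearMap.one_apply]
  rw [ContinuousLinearMap.sum_apply] at h1
  have h2 : ∀ i ∈ Finset.univ, (b i * d i) x = 0 := by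
    intro i _
    rw [ContinuousLinearMap.mul_apply, hdx i, map_zero]
  rw [Finset.sum_eq_zero h2] at h1
  exact h1.symm

lemma dense_Lg_map {A B : Type*} [NormedRing A] [NormedRing B] (φ : A →+* B)
    (hc : Continuous φ) (hs : Function.Surjective φ) {n : ℕ} (hd : Dense (Lg A n)) :
    Dense (Lg B n) := by
  have hc' : Continuous (fun a : Fin n → A => fun i => φ (a i)) :=
    continuous_pi fun i => hc.comp (continuous_apply i)
  have hs' : Function.Surjective (fun a : Fin n → A => fun i => φ (a i)) := by
    intro y
    choose g hg using hs
    exact ⟨fun i => g (y i), funext fun i => hg (y i)⟩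
  have himg : (fun a : Fin n → A => fun i => φ (a i)) '' (Lg A n) ⊆ Lg B n := by
    rintro _ ⟨a, ⟨b, hb⟩, rfl⟩
    refine ⟨fun i => φ (b i), ?_⟩
    have : (∑ i, φ (b i) * φ (a i)) = φ (∑ i, b i * a i) := by
      rw [map_sum]
      exact Finset.sum_congr rfl fun i _ => (map_mul φ _ _).symm
    rw [this, hb, map_one]
  exact (hs'.denseRange.dense_image hc' hd).mono himg

lemma dense_Rg_map {A B : Type*} [NormedRing A] [NormedRing B] (φ : A →+* B)
    (hc : Continuous φ) (hs : Function.Surjective φ) {n : ℕ} (hd : Dense (Rg A n)) :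
    Dense (Rg B n) := by
  have hc' : Continuous (fun a : Fin n → A => fun i => φ (a i)) :=
    continuous_pi fun i => hc.comp (continuous_apply i)
  have hs' : Function.Surjective (fun a : Fin n → A => fun i => φ (a i)) := by
    intro y
    choose g hg using hs
    exact ⟨fun i => g (y i), funext fun i => hg (y i)⟩
  have himg : (fun a : Fin n → A => fun i => φ (a i)) '' (Rg A n) ⊆ Rg B n := by
    rintro _ ⟨a, ⟨b, hb⟩, rfl⟩
    refine ⟨fun i => φ (b i), ?_⟩
    have : (∑ i, φ (a i) * φ (b i)) = φ (∑ i, a i * b i) := by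
      rw [map_sum]
      exact Finset.sum_congr rfl fun i _ => (map_mul φ _ _).symm
    rw [this, hb, map_one]
  exact (hs'.denseRange.dense_image hc' hd).mono himg

lemma dense_Lg_of_dense_Rg {B : Type*} [NormedRing B] [StarRing B] [ContinuousStar B]
    {n : ℕ} (hd : Dense (Rg B n)) : Dense (Lg B n) := by
  have hc' : Continuous (fun a : Fin n → B => fun i => star (a i)) :=
    continuous_pi fun i => continuous_star.comp (continuous_apply i)
  have hs' : Function.Surjective (fun a : Fin n → B => fun i => star (a i)) := by
    intro y
    exact ⟨fun i => star (y i), funext fun i => star_star _⟩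
  have himg : (fun a : Fin n → B => fun i => star (a i)) '' (Rg B n) ⊆ Lg B n := by
    rintro _ ⟨a, ⟨b, hb⟩, rfl⟩
    refine ⟨fun i => star (b i), ?_⟩
    have : (∑ i, star (b i) * star (a i)) = star (∑ i, a i * b i) := by
      rw [star_sum]
      exact Finset.sum_congr rfl fun i _ => (star_mul _ _).symm
    rw [this, hb, star_one]
  exact (hs'.denseRange.dense_image hc' hd).mono himg

end Stmt16Aux

end AuxStmt16

open Stmt16Aux

/-- If a nest has an infinite-dimensional atom `E = N₊ ⊖ N`, then compression to `E` is a
surjective multiplicative homomorphism of the nest algebra onto `B(E)`, and both the left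
and right topological stable ranks of the nest algebra are infinite. -/
theorem stmt16 {H : Type*} [NormedAddCommGroup H] [InnerProductSpace ℂ H] [CompleteSpace H]
    [TopologicalSpace.SeparableSpace H]
    (𝒩 : Set (Submodule ℂ H)) (h𝒩 : IsNest 𝒩)
    (N Nplus : Submodule ℂ H) (hN : N ∈ 𝒩)
    (hplus : Nplus = sInf {M | M ∈ 𝒩 ∧ N < M})
    (E : Submodule ℂ H) [CompleteSpace E] (hE : E = Nplus ⊓ Nᗮ)
    (hinf : ¬ FiniteDimensional ℂ E) :
    (∀ X Y : nestAlgebra 𝒩,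
        E.orthogonalProjectionOnto.comp (((X * Y : nestAlgebra 𝒩) : H →L[ℂ] H).comp E.subtypeL) =
          (E.orthogonalProjectionOnto.comp ((X : H →L[ℂ] H).comp E.subtypeL)) *
            (E.orthogonalProjectionOnto.comp ((Y : H →L[ℂ] H).comp E.subtypeL))) ∧
      Function.Surjective (fun X : nestAlgebra 𝒩 =>
        E.orthogonalProjectionOnto.comp ((X : H →L[ℂ] H).comp E.subtypeL)) ∧
      ltsr (nestAlgebra 𝒩) = ⊤ ∧ rtsr (nestAlgebra 𝒩) = ⊤ := by
  classical
  have hNplus_mem : Nplus ∈ 𝒩 := by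
    by_cases hne : {M | M ∈ 𝒩 ∧ N < M}.Nonempty
    · rw [hplus]; exact h𝒩.sInf_mem _ (fun M hM => hM.1) hne
    · rw [Set.not_nonempty_iff_eq_empty] at hne
      rw [hplus, hne, sInf_empty]
      exact h𝒩.top_mem
  have hNleP : N ≤ Nplus := by
    rw [hplus]; exact le_sInf (fun M hM => hM.2.le)
  have hEP : E ≤ Nplus := hE ▸ inf_le_left
  have hENo : E ≤ Nᗮ := hE ▸ inf_le_right
  have hNEo : ∀ z ∈ N, z ∈ Eᗮ := by
    intro z hz
    rw [Submodule.mem_orthogonal]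
    intro u hu
    exact inner_eq_zero_symm.mp ((Submodule.mem_orthogonal N u).1 (hENo hu) z hz)
  haveI : CompleteSpace N := (h𝒩.isClosed N hN).completeSpace_coe
  have hPzero : ∀ z ∈ N, E.orthogonalProjectionOnto z = 0 := fun z hz =>
    (Submodule.orthogonalProjectionOnto_eq_zero_iff (K := E)).2 (hNEo z hz)
  have hmemA : ∀ (X : nestAlgebra 𝒩) (M) (_ : M ∈ 𝒩) (x) (_ : x ∈ M), (X : H →L[ℂ] H) x ∈ M :=
    fun X M hM x hx => X.2 M hM x hx
  have key : ∀ u ∈ Nplus, u - (E.orthogonalProjectionOnto u : H) ∈ N := by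
    intro u hu
    have h1 : u - (N.orthogonalProjectionOnto u : H) ∈ Nᗮ := Submodule.sub_starProjection_mem_orthogonal (K := N) u
    have h2 : u - (N.orthogonalProjectionOnto u : H) ∈ Nplus :=
      Nplus.sub_mem hu (hNleP (N.orthogonalProjectionOnto u).2)
    have h3 : u - (N.orthogonalProjectionOnto u : H) ∈ E := by rw [hE]; exact ⟨h2, h1⟩
    have h4 : (E.orthogonalProjectionOnto u : H) = u - (N.orthogonalProjectionOnto u : H) := by
      apply Submodule.eq_starProjection_of_mem_of_inner_eq_zero (K := E) h3
      intro w hw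
      rw [sub_sub_cancel]
      exact inner_eq_zero_symm.mp
        ((Submodule.mem_orthogonal E _).1 (hNEo _ (N.orthogonalProjectionOnto u).2) w hw)
    rw [h4]
    simpa [sub_sub_cancel] using (N.orthogonalProjectionOnto u).2
  have hmul : ∀ X Y : nestAlgebra 𝒩,
      E.orthogonalProjectionOnto.comp (((X * Y : nestAlgebra 𝒩) : H →L[ℂ] H).comp E.subtypeL) =
        (E.orthogonalProjectionOnto.comp ((X : H →L[ℂ] H).comp E.subtypeL)) *
          (E.orthogonalProjectionOnto.comp ((Y : H →L[ℂ] H).comp E.subtypeL)) := by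
    intro X Y
    ext e
    have hu : (Y : H →L[ℂ] H) (e : H) ∈ Nplus := hmemA Y Nplus hNplus_mem _ (hEP e.2)
    have hdiff : (X : H →L[ℂ] H) ((Y : H →L[ℂ] H) (e : H)) -
        (X : H →L[ℂ] H) ((E.orthogonalProjectionOnto ((Y : H →L[ℂ] H) (e : H)) : H)) ∈ N := by
      rw [← map_sub]
      exact hmemA X N hN _ (key _ hu)
    have hP : E.orthogonalProjectionOnto ((X : H →L[ℂ] H) ((Y : H →L[ℂ] H) (e : H))) =
        E.orthogonalProjectionOnto
          ((X : H →L[ℂ] H) ((E.orthogonalProjectionOnto ((Y : H →L[ℂ] H) (e : H)) : H))) := by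
      have h := hPzero _ hdiff
      rw [map_sub] at h
      exact sub_eq_zero.mp h
    simpa only [ContinuousLinearMap.comp_apply, ContinuousLinearMap.mul_apply,
      Submodule.subtypeL_apply, MulMemClass.coe_mul] using congrArg Subtype.val hP
  have hsurj : Function.Surjective (fun X : nestAlgebra 𝒩 =>
      E.orthogonalProjectionOnto.comp ((X : H →L[ℂ] H).comp E.subtypeL)) := by
    intro T
    have hmemX : (E.subtypeL.comp (T.comp (E.orthogonalProjectionOnto)) : H →L[ℂ] H) ∈
        nestAlgebra 𝒩 := by
      intro M hM x hx
      show (E.subtypeL (T (E.orthogonalProjectionOnto x))) ∈ M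
      by_cases hMN : M ≤ N
      · have hP0 : E.orthogonalProjectionOnto x = 0 :=
          (Submodule.orthogonalProjectionOnto_eq_zero_iff (K := E)).2 (hNEo x (hMN hx))
        rw [hP0, map_zero, map_zero]
        exact M.zero_mem
      · have hNM : N < M := by
          rcases h𝒩.isChain.total hM hN with h | h
          · exact absurd h hMN
          · exact lt_of_le_of_ne h (by rintro rfl; exact hMN le_rfl)
        have hPM : Nplus ≤ M := by rw [hplus]; exact sInf_le ⟨hM, hNM⟩
        exact hPM (hEP (T (E.orthogonalProjectionOnto x)).2)
    refine ⟨⟨_, hmemX⟩, ?_⟩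
    ext e
    show (E.orthogonalProjectionOnto
        (E.subtypeL (T (E.orthogonalProjectionOnto (E.subtypeL e)))) : H) = (T e : H)
    rw [Submodule.subtypeL_apply, Submodule.subtypeL_apply,
      Submodule.orthogonalProjectionOnto_mem_subspace_eq_self, Submodule.orthogonalProjectionOnto_mem_subspace_eq_self]
  haveI : SecondCountableTopology H := UniformSpace.secondCountable_of_separable H
  haveI : TopologicalSpace.SeparableSpace E :=
    TopologicalSpace.SecondCountableTopology.to_separableSpace
  let γ : nestAlgebra 𝒩 →+* (E →L[ℂ] E) :=
    { toFun := fun X => E.orthogonalProjectionOnto.comp ((X : H →L[ℂ] H).comp E.subtypeL)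
      map_one' := by
        ext e
        show (E.orthogonalProjectionOnto (((1 : nestAlgebra 𝒩) : H →L[ℂ] H) (E.subtypeL e)) : H)
          = ((1 : E →L[ℂ] E) e : H)
        rw [OneMemClass.coe_one, ContinuousLinearMap.one_apply, ContinuousLinearMap.one_apply,
          Submodule.subtypeL_apply, Submodule.orthogonalProjectionOnto_mem_subspace_eq_self]
      map_mul' := hmul
      map_zero' := by
        ext e
        show (E.orthogonalProjectionOnto (((0 : nestAlgebra 𝒩) : H →L[ℂ] H) (E.subtypeL e)) : H)
          = ((0 : E →L[ℂ] E) e : H)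
        rw [ZeroMemClass.coe_zero]
        simp
      map_add' := by
        intro X Y
        ext e
        show (E.orthogonalProjectionOnto (((X + Y : nestAlgebra 𝒩) : H →L[ℂ] H) (E.subtypeL e)) : H)
          = _
        rw [AddMemClass.coe_add]
        simp }
  have hγs : Function.Surjective ⇑γ := hsurj
  have hγc : Continuous ⇑γ :=
    continuous_const.clm_comp ((continuous_subtype_val).clm_comp continuous_const)
  have hLg : ∀ n : ℕ, ¬ Dense (Lg (nestAlgebra 𝒩) n) := fun n hd =>
    not_dense_Lg ↥E hinf n (dense_Lg_map γ hγc hγs hd)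
  have hRg : ∀ n : ℕ, ¬ Dense (Rg (nestAlgebra 𝒩) n) := fun n hd =>
    not_dense_Lg ↥E hinf n (dense_Lg_of_dense_Rg (dense_Rg_map γ hγc hγs hd))
  refine ⟨hmul, hsurj, ?_, ?_⟩
  · have hempty : {m : ℕ∞ | ∃ n : ℕ, m = n ∧ Dense (Lg (nestAlgebra 𝒩) n)} = ∅ := by
      rw [Set.eq_empty_iff_forall_notMem]
      rintro m ⟨n, rfl, hd⟩
      exact hLg n hd
    unfold ltsr
    rw [hempty, sInf_empty]
  · have hempty : {m : ℕ∞ | ∃ n : ℕ, m = n ∧ Dense (Rg (nestAlgebra 𝒩) n)} = ∅ := by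
      rw [Set.eq_empty_iff_forall_notMem]
      rintro m ⟨n, rfl, hd⟩
      exact hRg n hd
    unfold rtsr
    rw [hempty, sInf_empty]
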